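/- √5 · log φ = (5/(3·2²⁰)) · ∑_{k=0}^∞ (1/2²⁰)^k · ∑_{j=1}^{40} a_j/(40k + j), where φ = (1+√5)/2 and (a₁,...,a₄₀) = (2¹⁹, 0, 2¹⁸, 2¹⁸, 0, 0, -2¹⁶, 2¹⁶, 2¹⁵, 0, -2¹⁴, -2¹⁴, 2¹³, 0, 0, -2¹², -2¹¹, 0, -2¹⁰, 0, -2⁹, 0, -2⁸, -2⁸, 0, 0, 2⁶, -2⁶, -2⁵, 0, 2⁴, 2⁴, -2³, 0, 0, 2², 2, 0, 1, 0). -/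

import Mathlib

set_option maxHeartbeats 1000000

/-- The coefficient vector (a₁, ..., a₄₀) of the binary BBP-type formula for √5 log φ,
indexed by `j ∈ Fin 40` (so `bbpCoeff j` corresponds to `a_{j+1}`). -/
def bbpCoeff : Fin 40 → ℝ :=
  ![2 ^ 19, 0, 2 ^ 18, 2 ^ 18, 0, 0, -(2 ^ 16), 2 ^ 16, 2 ^ 15, 0, -(2 ^ 14), -(2 ^ 14),
    2 ^ 13, 0, 0, -(2 ^ 12), -(2 ^ 11), 0, -(2 ^ 10), 0, -(2 ^ 9), 0, -(2 ^ 8), -(2 ^ 8),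
    0, 0, 2 ^ 6, -(2 ^ 6), -(2 ^ 5), 0, 2 ^ 4, 2 ^ 4, -(2 ^ 3), 0, 0, 2 ^ 2, 2, 0, 1, 0]

/-- The sequence `2, s, …` with recurrence `x_{n+2} = s·x_{n+1} - x_n/2`;
it equals `z^n + conj z ^ n` where `z` is a root of `X² - s·X + 1/2`. -/
noncomputable def mk (s : ℝ) : ℕ → ℝ
  | 0 => 2
  | 1 => s
  | n+2 => s * mk s (n+1) - mk s n / 2

lemma mk_two_step (s : ℝ) (n : ℕ) : mk s (n+2) = s * mk s (n+1) - mk s n / 2 := rfl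

/-- Key analytic input: the log series for a quadratic conjugate pair. -/
lemma mk_hasSum (s : ℝ) (h4 : s^2 < 2) :
    HasSum (fun n : ℕ => mk s n / n) (-Real.log (3/2 - s)) := by
  have hs2 : (0:ℝ) ≤ 2 - s^2 := by linarith
  set d : ℝ := Real.sqrt (2 - s^2) with hd
  have hdsq : d^2 = 2 - s^2 := Real.sq_sqrt hs2
  set z : ℂ := ⟨s/2, d/2⟩ with hz
  have hzre : z.re = s/2 := rfl
  have hzim : z.im = d/2 := rfl
  have hzeq : z = (s/2 : ℝ) + (d/2 : ℝ) * Complex.I := by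
    apply Complex.ext <;> simp [hzre, hzim]
  have hznorm : Complex.normSq z = 1/2 := by
    rw [Complex.normSq_mk]; linear_combination hdsq/4
  have hza : ‖z‖ < 1 := by
    rw [Complex.norm_def, hznorm]
    rw [show (1:ℝ) = Real.sqrt 1 from (Real.sqrt_one).symm]
    exact Real.sqrt_lt_sqrt (by norm_num) (by norm_num)
  have hzca : ‖(starRingEnd ℂ) z‖ < 1 := by rwa [RCLike.norm_conj]
  have H1 := Complex.hasSum_taylorSeries_neg_log hza
  have H2 := Complex.hasSum_taylorSeries_neg_log hzca
  have hdC : (d:ℂ)^2 = 2 - (s:ℂ)^2 := by exact_mod_cast congrArg Complex.ofReal hdsq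
  have hz2 : z^2 = (s:ℂ) * z - 1/2 := by
    rw [hzeq]
    push_cast
    linear_combination ((d:ℂ)^2/4) * Complex.I_sq - (1/4) * hdC
  have hz2c : ((starRingEnd ℂ) z)^2 = (s:ℂ) * (starRingEnd ℂ) z - 1/2 := by
    rw [← map_pow, hz2]
    simp [Complex.conj_ofReal, map_ofNat]
  have hrec : ∀ n : ℕ, ((mk s n : ℝ) : ℂ) = z^n + ((starRingEnd ℂ) z)^n := by
    have key : ∀ n : ℕ, ((mk s n : ℝ) : ℂ) = z^n + ((starRingEnd ℂ) z)^n ∧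
        ((mk s (n+1) : ℝ) : ℂ) = z^(n+1) + ((starRingEnd ℂ) z)^(n+1) := by
      intro n
      induction n with
      | zero =>
        constructor
        · rw [show mk s 0 = 2 from rfl]; push_cast; ring
        · rw [show mk s 1 = s from rfl, pow_one, pow_one, Complex.add_conj, hzre]
          push_cast; ring
      | succ n ih =>
        refine ⟨ih.2, ?_⟩
        rw [mk_two_step]
        push_cast
        rw [ih.1, ih.2]
        linear_combination (-(z^n)) * hz2 - (((starRingEnd ℂ) z)^n) * hz2c
    exact fun n => (key n).1
  have H3 : HasSum (fun n : ℕ => ((mk s n / n : ℝ) : ℂ))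
      (-Complex.log (1 - z) + -Complex.log (1 - (starRingEnd ℂ) z)) := by
    have hfe : (fun n : ℕ => ((mk s n / n : ℝ) : ℂ))
        = fun n : ℕ => z^n / n + ((starRingEnd ℂ) z)^n / n := by
      funext n
      push_cast
      rw [hrec n]
      ring
    rw [hfe]
    exact H1.add H2
  have hrepos : (0:ℝ) < 1 - s/2 := by nlinarith
  have harg : (1 - z).arg ≠ Real.pi := by
    intro h
    rw [Complex.arg_eq_pi_iff] at h
    have hre1 : (1 - z).re = 1 - s/2 := by simp [hzre]
    rw [hre1] at h
    linarith [h.1]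
  have hconj1 : (1 : ℂ) - (starRingEnd ℂ) z = (starRingEnd ℂ) (1 - z) := by
    rw [map_sub, map_one]
  have habs : ‖1-z‖^2 = 3/2 - s := by
    rw [Complex.sq_norm, Complex.normSq_apply]
    have h1 : (1 - z).re = 1 - s/2 := by simp [hzre]
    have h2 : (1 - z).im = -(d/2) := by simp [hzim]
    rw [h1, h2]
    linear_combination hdsq/4
  have hlogsum : Complex.log (1-z) + Complex.log (1 - (starRingEnd ℂ) z)
      = ((Real.log (3/2 - s) : ℝ) : ℂ) := by
    rw [hconj1, Complex.log_conj _ harg, Complex.add_conj, Complex.log_re]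
    norm_cast
    rw [← habs, Real.log_pow]
    push_cast; ring
  have H4 : HasSum (fun n : ℕ => ((mk s n / n : ℝ) : ℂ)) (((-Real.log (3/2 - s) : ℝ) : ℂ)) := by
    convert H3 using 1
    rw [show -Complex.log (1 - z) + -Complex.log (1 - (starRingEnd ℂ) z)
        = -(Complex.log (1-z) + Complex.log (1 - (starRingEnd ℂ) z)) by ring, hlogsum]
    push_cast; ring
  have hre := Complex.reCLM.hasSum H4
  simpa using hre

lemma mk_shift (s : ℝ) (h40 : mk s 40 = 2/2^20) (h41 : mk s 41 = s/2^20) :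
    ∀ m, mk s (m+40) = mk s m / 2^20 := by
  have key : ∀ m, mk s (m+40) = mk s m / 2^20 ∧ mk s (m+41) = mk s (m+1) / 2^20 := by
    intro m
    induction m with
    | zero =>
      constructor
      · rw [Nat.zero_add, h40, show mk s 0 = (2:ℝ) from rfl]
      · rw [Nat.zero_add, h41, show mk s 1 = s from rfl]
    | succ n ih =>
      refine ⟨by rw [show n+1+40 = n+41 from rfl]; exact ih.2, ?_⟩
      rw [show n+1+41 = (n+40)+2 from by omega, mk_two_step, ih.1,
        show n+40+1 = n+41 from rfl, ih.2, show n+1+1 = n+2 from rfl, mk_two_step]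
      ring
  exact fun m => (key m).1

lemma mk_scale (s : ℝ) (h40 : mk s 40 = 2/2^20) (h41 : mk s 41 = s/2^20) :
    ∀ k m, mk s (40*k+m) = mk s m / (2^20)^k := by
  intro k
  induction k with
  | zero => intro m; simp
  | succ n ih =>
    intro m
    rw [show 40*(n+1)+m = (40*n+m)+40 from by ring, mk_shift s h40 h41, ih, pow_succ]
    ring

lemma tblA (u s : ℝ) (h5 : u^2 = 5) (hs : s^2 = (1 + u)/2 * s - (u - 1)/4) :
    mk s 0 = (2) ∧ mk s 1 = s ∧ mk s 2 = ((-3/4) + (1/2)*s + (-1/4)*u + (1/2)*u*s) ∧ mk s 3 = ((-1/2) + (1/4)*s + (1/4)*u*s) ∧ mk s 4 = ((1/8) + (1/8)*u) ∧ mk s 5 = ((1/4)) ∧ mk s 6 = ((-1/16) + (1/4)*s + (-1/16)*u) ∧ mk s 7 = ((-1/16) + (1/16)*s + (-1/16)*u + (1/16)*u*s) ∧ mk s 8 = ((-1/32) + (1/32)*u) ∧ mk s 9 = ((1/32) + (-1/16)*s + (1/32)*u) ∧ mk s 10 = (0 : ℝ) ∧ mk s 11 = ((-1/64) + (1/32)*s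 + (-1/64)*u) ∧ mk s 12 = ((1/128) + (-1/128)*u) ∧ mk s 13 = ((1/128) + (-1/128)*s + (1/128)*u + (-1/128)*u*s) ∧ mk s 14 = ((1/256) + (-1/64)*s + (1/256)*u) ∧ mk s 15 = ((-1/128)) ∧ mk s 16 = ((-1/512) + (-1/512)*u) ∧ mk s 17 = ((1/256) + (-1/512)*s + (-1/512)*u*s) ∧ mk s 18 = ((3/1024) + (-1/512)*s + (1/1024)*u + (-1/512)*u*s) ∧ mk s 19 = ((-1/512)*s) ∧ mk s 20 = ((-1/512)) ∧ mk s 21 = ((-1/1024)*s) ∧ mk s 22 = ((3/4096) + (-1/2048)*s + (1/4096)*u + (-1/2048)*u*s) ∧ mk s 23 = ((1/2048) + (-1/4096)*s + (-1/4096)*u*s) ∧ mk s 24 = ((-1/8192) + (-1/8192)*u) ∧ mk s 25 = ((-1/4096)) ∧ mk s 26 = ((1/16384) + (-1/4096)*s + (1/16384)*u) ∧ mk s 27 = ((1/16384) + (-1/16384)*s + (1/16384)*u + (-1/16384)*u*s) ∧ mk s 28 = ((1/32768) + (-1/32768)*u) ∧ mk s 29 = ((-1/32768) + (1/16384)*s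 + (-1/32768)*u) ∧ mk s 30 = (0 : ℝ) ∧ mk s 31 = ((1/65536) + (-1/32768)*s + (1/65536)*u) ∧ mk s 32 = ((-1/131072) + (1/131072)*u) ∧ mk s 33 = ((-1/131072) + (1/131072)*s + (-1/131072)*u + (1/131072)*u*s) ∧ mk s 34 = ((-1/262144) + (1/65536)*s + (-1/262144)*u) ∧ mk s 35 = ((1/131072)) ∧ mk s 36 = ((1/524288) + (1/524288)*u) ∧ mk s 37 = ((-1/262144) + (1/524288)*s + (1/524288)*u*s) ∧ mk s 38 = ((-3/1048576) + (1/524288)*s + (-1/1048576)*u + (1/524288)*u*s) ∧ mk s 39 = ((1/524288)*s) ∧ mk s 40 = ((1/524288)) ∧ mk s 41 = ((1/1048576)*s) := by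
  have e0 : mk s 0 = 2 := rfl
  have e1 : mk s 1 = s := rfl
  have e2 : mk s 2 = ((-3/4) + (1/2)*s + (-1/4)*u + (1/2)*u*s) := by
    have h2 : mk s 2 = s * mk s 1 - mk s 0 / 2 := rfl
    rw [h2, e1, e0]; linear_combination (1) * hs
  have e3 : mk s 3 = ((-1/2) + (1/4)*s + (1/4)*u*s) := by
    have h3 : mk s 3 = s * mk s 2 - mk s 1 / 2 := rfl
    rw [h3, e2, e1]; linear_combination ((1/2) + (1/2)*u) * hs + ((-1/8) + (1/4)*s) * h5
  have e4 : mk s 4 = ((1/8) + (1/8)*u) := by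
    have h4 : mk s 4 = s * mk s 3 - mk s 2 / 2 := rfl
    rw [h4, e3, e2]; linear_combination ((1/4) + (1/4)*u) * hs + ((-1/16) + (1/8)*s) * h5
  have e5 : mk s 5 = ((1/4)) := by
    have h5 : mk s 5 = s * mk s 4 - mk s 3 / 2 := rfl
    rw [h5, e4, e3]; ring
  have e6 : mk s 6 = ((-1/16) + (1/4)*s + (-1/16)*u) := by
    have h6 : mk s 6 = s * mk s 5 - mk s 4 / 2 := rfl
    rw [h6, e5, e4]; ring
  have e7 : mk s 7 = ((-1/16) + (1/16)*s + (-1/16)*u + (1/16)*u*s) := by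
    have h7 : mk s 7 = s * mk s 6 - mk s 5 / 2 := rfl
    rw [h7, e6, e5]; linear_combination ((1/4)) * hs
  have e8 : mk s 8 = ((-1/32) + (1/32)*u) := by
    have h8 : mk s 8 = s * mk s 7 - mk s 6 / 2 := rfl
    rw [h8, e7, e6]; linear_combination ((1/16) + (1/16)*u) * hs + ((-1/64) + (1/32)*s) * h5
  have e9 : mk s 9 = ((1/32) + (-1/16)*s + (1/32)*u) := by
    have h9 : mk s 9 = s * mk s 8 - mk s 7 / 2 := rfl
    rw [h9, e8, e7]; ring
  have e10 : mk s 10 = (0 : ℝ) := by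
    have h10 : mk s 10 = s * mk s 9 - mk s 8 / 2 := rfl
    rw [h10, e9, e8]; linear_combination ((-1/16)) * hs
  have e11 : mk s 11 = ((-1/64) + (1/32)*s + (-1/64)*u) := by
    have h11 : mk s 11 = s * mk s 10 - mk s 9 / 2 := rfl
    rw [h11, e10, e9]; ring
  have e12 : mk s 12 = ((1/128) + (-1/128)*u) := by
    have h12 : mk s 12 = s * mk s 11 - mk s 10 / 2 := rfl
    rw [h12, e11, e10]; linear_combination ((1/32)) * hs
  have e13 : mk s 13 = ((1/128) + (-1/128)*s + (1/128)*u + (-1/128)*u*s) := by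
    have h13 : mk s 13 = s * mk s 12 - mk s 11 / 2 := rfl
    rw [h13, e12, e11]; ring
  have e14 : mk s 14 = ((1/256) + (-1/64)*s + (1/256)*u) := by
    have h14 : mk s 14 = s * mk s 13 - mk s 12 / 2 := rfl
    rw [h14, e13, e12]; linear_combination ((-1/128) + (-1/128)*u) * hs + ((1/512) + (-1/256)*s) * h5
  have e15 : mk s 15 = ((-1/128)) := by
    have h15 : mk s 15 = s * mk s 14 - mk s 13 / 2 := rfl
    rw [h15, e14, e13]; linear_combination ((-1/64)) * hs
  have e16 : mk s 16 = ((-1/512) + (-1/512)*u) := by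
    have h16 : mk s 16 = s * mk s 15 - mk s 14 / 2 := rfl
    rw [h16, e15, e14]; ring
  have e17 : mk s 17 = ((1/256) + (-1/512)*s + (-1/512)*u*s) := by
    have h17 : mk s 17 = s * mk s 16 - mk s 15 / 2 := rfl
    rw [h17, e16, e15]; ring
  have e18 : mk s 18 = ((3/1024) + (-1/512)*s + (1/1024)*u + (-1/512)*u*s) := by
    have h18 : mk s 18 = s * mk s 17 - mk s 16 / 2 := rfl
    rw [h18, e17, e16]; linear_combination ((-1/512) + (-1/512)*u) * hs + ((1/2048) + (-1/1024)*s) * h5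
  have e19 : mk s 19 = ((-1/512)*s) := by
    have h19 : mk s 19 = s * mk s 18 - mk s 17 / 2 := rfl
    rw [h19, e18, e17]; linear_combination ((-1/512) + (-1/512)*u) * hs + ((1/2048) + (-1/1024)*s) * h5
  have e20 : mk s 20 = ((-1/512)) := by
    have h20 : mk s 20 = s * mk s 19 - mk s 18 / 2 := rfl
    rw [h20, e19, e18]; linear_combination ((-1/512)) * hs
  have e21 : mk s 21 = ((-1/1024)*s) := by
    have h21 : mk s 21 = s * mk s 20 - mk s 19 / 2 := rfl
    rw [h21, e20, e19]; ring
  have e22 : mk s 22 = ((3/4096) + (-1/2048)*s + (1/4096)*u + (-1/2048)*u*s) := by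
    have h22 : mk s 22 = s * mk s 21 - mk s 20 / 2 := rfl
    rw [h22, e21, e20]; linear_combination ((-1/1024)) * hs
  have e23 : mk s 23 = ((1/2048) + (-1/4096)*s + (-1/4096)*u*s) := by
    have h23 : mk s 23 = s * mk s 22 - mk s 21 / 2 := rfl
    rw [h23, e22, e21]; linear_combination ((-1/2048) + (-1/2048)*u) * hs + ((1/8192) + (-1/4096)*s) * h5
  have e24 : mk s 24 = ((-1/8192) + (-1/8192)*u) := by
    have h24 : mk s 24 = s * mk s 23 - mk s 22 / 2 := rfl
    rw [h24, e23, e22]; linear_combination ((-1/4096) + (-1/4096)*u) * hs + ((1/16384) + (-1/8192)*s) * h5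
  have e25 : mk s 25 = ((-1/4096)) := by
    have h25 : mk s 25 = s * mk s 24 - mk s 23 / 2 := rfl
    rw [h25, e24, e23]; ring
  have e26 : mk s 26 = ((1/16384) + (-1/4096)*s + (1/16384)*u) := by
    have h26 : mk s 26 = s * mk s 25 - mk s 24 / 2 := rfl
    rw [h26, e25, e24]; ring
  have e27 : mk s 27 = ((1/16384) + (-1/16384)*s + (1/16384)*u + (-1/16384)*u*s) := by
    have h27 : mk s 27 = s * mk s 26 - mk s 25 / 2 := rfl
    rw [h27, e26, e25]; linear_combination ((-1/4096)) * hs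
  have e28 : mk s 28 = ((1/32768) + (-1/32768)*u) := by
    have h28 : mk s 28 = s * mk s 27 - mk s 26 / 2 := rfl
    rw [h28, e27, e26]; linear_combination ((-1/16384) + (-1/16384)*u) * hs + ((1/65536) + (-1/32768)*s) * h5
  have e29 : mk s 29 = ((-1/32768) + (1/16384)*s + (-1/32768)*u) := by
    have h29 : mk s 29 = s * mk s 28 - mk s 27 / 2 := rfl
    rw [h29, e28, e27]; ring
  have e30 : mk s 30 = (0 : ℝ) := by
    have h30 : mk s 30 = s * mk s 29 - mk s 28 / 2 := rfl
    rw [h30, e29, e28]; linear_combination ((1/16384)) * hs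
  have e31 : mk s 31 = ((1/65536) + (-1/32768)*s + (1/65536)*u) := by
    have h31 : mk s 31 = s * mk s 30 - mk s 29 / 2 := rfl
    rw [h31, e30, e29]; ring
  have e32 : mk s 32 = ((-1/131072) + (1/131072)*u) := by
    have h32 : mk s 32 = s * mk s 31 - mk s 30 / 2 := rfl
    rw [h32, e31, e30]; linear_combination ((-1/32768)) * hs
  have e33 : mk s 33 = ((-1/131072) + (1/131072)*s + (-1/131072)*u + (1/131072)*u*s) := by
    have h33 : mk s 33 = s * mk s 32 - mk s 31 / 2 := rfl
    rw [h33, e32, e31]; ring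
  have e34 : mk s 34 = ((-1/262144) + (1/65536)*s + (-1/262144)*u) := by
    have h34 : mk s 34 = s * mk s 33 - mk s 32 / 2 := rfl
    rw [h34, e33, e32]; linear_combination ((1/131072) + (1/131072)*u) * hs + ((-1/524288) + (1/262144)*s) * h5
  have e35 : mk s 35 = ((1/131072)) := by
    have h35 : mk s 35 = s * mk s 34 - mk s 33 / 2 := rfl
    rw [h35, e34, e33]; linear_combination ((1/65536)) * hs
  have e36 : mk s 36 = ((1/524288) + (1/524288)*u) := by
    have h36 : mk s 36 = s * mk s 35 - mk s 34 / 2 := rfl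
    rw [h36, e35, e34]; ring
  have e37 : mk s 37 = ((-1/262144) + (1/524288)*s + (1/524288)*u*s) := by
    have h37 : mk s 37 = s * mk s 36 - mk s 35 / 2 := rfl
    rw [h37, e36, e35]; ring
  have e38 : mk s 38 = ((-3/1048576) + (1/524288)*s + (-1/1048576)*u + (1/524288)*u*s) := by
    have h38 : mk s 38 = s * mk s 37 - mk s 36 / 2 := rfl
    rw [h38, e37, e36]; linear_combination ((1/524288) + (1/524288)*u) * hs + ((-1/2097152) + (1/1048576)*s) * h5
  have e39 : mk s 39 = ((1/524288)*s) := by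
    have h39 : mk s 39 = s * mk s 38 - mk s 37 / 2 := rfl
    rw [h39, e38, e37]; linear_combination ((1/524288) + (1/524288)*u) * hs + ((-1/2097152) + (1/1048576)*s) * h5
  have e40 : mk s 40 = ((1/524288)) := by
    have h40 : mk s 40 = s * mk s 39 - mk s 38 / 2 := rfl
    rw [h40, e39, e38]; linear_combination ((1/524288)) * hs
  have e41 : mk s 41 = ((1/1048576)*s) := by
    have h41 : mk s 41 = s * mk s 40 - mk s 39 / 2 := rfl
    rw [h41, e40, e39]; ring
  exact ⟨e0, e1, e2, e3, e4, e5, e6, e7, e8, e9, e10, e11, e12, e13, e14, e15, e16, e17, e18, e19, e20, e21, e22, e23, e24, e25, e26, e27, e28, e29, e30, e31, e32, e33, e34, e35, e36, e37, e38, e39, e40, e41⟩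

lemma tblB (u s : ℝ) (h5 : u^2 = 5) (hs : s^2 = (1 - u)/2 * s - (-(1 + u)/4)) :
    mk s 0 = (2) ∧ mk s 1 = s ∧ mk s 2 = ((-3/4) + (1/2)*s + (1/4)*u + (-1/2)*u*s) ∧ mk s 3 = ((-1/2) + (1/4)*s + (-1/4)*u*s) ∧ mk s 4 = ((1/8) + (-1/8)*u) ∧ mk s 5 = ((1/4)) ∧ mk s 6 = ((-1/16) + (1/4)*s + (1/16)*u) ∧ mk s 7 = ((-1/16) + (1/16)*s + (1/16)*u + (-1/16)*u*s) ∧ mk s 8 = ((-1/32) + (-1/32)*u) ∧ mk s 9 = ((1/32) + (-1/16)*s + (-1/32)*u) ∧ mk s 10 = (0 : ℝ) ∧ mk s 11 = ((-1/64) + (1/32)*s + (1/64)*u) ∧ mk s 12 = ((1/128) + (1/128)*u) ∧ mk s 13 = ((1/128) + (-1/128)*s + (-1/128)*u + (1/128)*u*s) ∧ mk s 14 = ((1/256) + (-1/64)*s + (-1/256)*u) ∧ mk s 15 = ((-1/128)) ∧ mk s 16 = ((-1/512) + (1/512)*u) ∧ mk s 17 = ((1/256) + (-1/512)*s + (1/512)*u*s)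 ∧ mk s 18 = ((3/1024) + (-1/512)*s + (-1/1024)*u + (1/512)*u*s) ∧ mk s 19 = ((-1/512)*s) ∧ mk s 20 = ((-1/512)) ∧ mk s 21 = ((-1/1024)*s) ∧ mk s 22 = ((3/4096) + (-1/2048)*s + (-1/4096)*u + (1/2048)*u*s) ∧ mk s 23 = ((1/2048) + (-1/4096)*s + (1/4096)*u*s) ∧ mk s 24 = ((-1/8192) + (1/8192)*u) ∧ mk s 25 = ((-1/4096)) ∧ mk s 26 = ((1/16384) + (-1/4096)*s + (-1/16384)*u) ∧ mk s 27 = ((1/16384) + (-1/16384)*s + (-1/16384)*u + (1/16384)*u*s) ∧ mk s 28 = ((1/32768) + (1/32768)*u) ∧ mk s 29 = ((-1/32768) + (1/16384)*s + (1/32768)*u) ∧ mk s 30 = (0 : ℝ) ∧ mk s 31 = ((1/65536) + (-1/32768)*s + (-1/65536)*u) ∧ mk s 32 = ((-1/131072) + (-1/131072)*u) ∧ mk s 33 = ((-1/131072) + (1/131072)*s + (1/131072)*u + (-1/131072)*u*s) ∧ mk s 34 = ((-1/262144) + (1/65536)*s + (1/262144)*u) ∧ mk s 35 = ((1/131072))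 ∧ mk s 36 = ((1/524288) + (-1/524288)*u) ∧ mk s 37 = ((-1/262144) + (1/524288)*s + (-1/524288)*u*s) ∧ mk s 38 = ((-3/1048576) + (1/524288)*s + (1/1048576)*u + (-1/524288)*u*s) ∧ mk s 39 = ((1/524288)*s) ∧ mk s 40 = ((1/524288)) ∧ mk s 41 = ((1/1048576)*s) := by
  have e0 : mk s 0 = 2 := rfl
  have e1 : mk s 1 = s := rfl
  have e2 : mk s 2 = ((-3/4) + (1/2)*s + (1/4)*u + (-1/2)*u*s) := by
    have h2 : mk s 2 = s * mk s 1 - mk s 0 / 2 := rfl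
    rw [h2, e1, e0]; linear_combination (1) * hs
  have e3 : mk s 3 = ((-1/2) + (1/4)*s + (-1/4)*u*s) := by
    have h3 : mk s 3 = s * mk s 2 - mk s 1 / 2 := rfl
    rw [h3, e2, e1]; linear_combination ((1/2) + (-1/2)*u) * hs + ((-1/8) + (1/4)*s) * h5
  have e4 : mk s 4 = ((1/8) + (-1/8)*u) := by
    have h4 : mk s 4 = s * mk s 3 - mk s 2 / 2 := rfl
    rw [h4, e3, e2]; linear_combination ((1/4) + (-1/4)*u) * hs + ((-1/16) + (1/8)*s) * h5
  have e5 : mk s 5 = ((1/4)) := by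
    have h5 : mk s 5 = s * mk s 4 - mk s 3 / 2 := rfl
    rw [h5, e4, e3]; ring
  have e6 : mk s 6 = ((-1/16) + (1/4)*s + (1/16)*u) := by
    have h6 : mk s 6 = s * mk s 5 - mk s 4 / 2 := rfl
    rw [h6, e5, e4]; ring
  have e7 : mk s 7 = ((-1/16) + (1/16)*s + (1/16)*u + (-1/16)*u*s) := by
    have h7 : mk s 7 = s * mk s 6 - mk s 5 / 2 := rfl
    rw [h7, e6, e5]; linear_combination ((1/4)) * hs
  have e8 : mk s 8 = ((-1/32) + (-1/32)*u) := by
    have h8 : mk s 8 = s * mk s 7 - mk s 6 / 2 := rfl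
    rw [h8, e7, e6]; linear_combination ((1/16) + (-1/16)*u) * hs + ((-1/64) + (1/32)*s) * h5
  have e9 : mk s 9 = ((1/32) + (-1/16)*s + (-1/32)*u) := by
    have h9 : mk s 9 = s * mk s 8 - mk s 7 / 2 := rfl
    rw [h9, e8, e7]; ring
  have e10 : mk s 10 = (0 : ℝ) := by
    have h10 : mk s 10 = s * mk s 9 - mk s 8 / 2 := rfl
    rw [h10, e9, e8]; linear_combination ((-1/16)) * hs
  have e11 : mk s 11 = ((-1/64) + (1/32)*s + (1/64)*u) := by
    have h11 : mk s 11 = s * mk s 10 - mk s 9 / 2 := rfl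
    rw [h11, e10, e9]; ring
  have e12 : mk s 12 = ((1/128) + (1/128)*u) := by
    have h12 : mk s 12 = s * mk s 11 - mk s 10 / 2 := rfl
    rw [h12, e11, e10]; linear_combination ((1/32)) * hs
  have e13 : mk s 13 = ((1/128) + (-1/128)*s + (-1/128)*u + (1/128)*u*s) := by
    have h13 : mk s 13 = s * mk s 12 - mk s 11 / 2 := rfl
    rw [h13, e12, e11]; ring
  have e14 : mk s 14 = ((1/256) + (-1/64)*s + (-1/256)*u) := by
    have h14 : mk s 14 = s * mk s 13 - mk s 12 / 2 := rfl
    rw [h14, e13, e12]; linear_combination ((-1/128) + (1/128)*u) * hs + ((1/512) + (-1/256)*s) * h5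
  have e15 : mk s 15 = ((-1/128)) := by
    have h15 : mk s 15 = s * mk s 14 - mk s 13 / 2 := rfl
    rw [h15, e14, e13]; linear_combination ((-1/64)) * hs
  have e16 : mk s 16 = ((-1/512) + (1/512)*u) := by
    have h16 : mk s 16 = s * mk s 15 - mk s 14 / 2 := rfl
    rw [h16, e15, e14]; ring
  have e17 : mk s 17 = ((1/256) + (-1/512)*s + (1/512)*u*s) := by
    have h17 : mk s 17 = s * mk s 16 - mk s 15 / 2 := rfl
    rw [h17, e16, e15]; ring
  have e18 : mk s 18 = ((3/1024) + (-1/512)*s + (-1/1024)*u + (1/512)*u*s) := by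
    have h18 : mk s 18 = s * mk s 17 - mk s 16 / 2 := rfl
    rw [h18, e17, e16]; linear_combination ((-1/512) + (1/512)*u) * hs + ((1/2048) + (-1/1024)*s) * h5
  have e19 : mk s 19 = ((-1/512)*s) := by
    have h19 : mk s 19 = s * mk s 18 - mk s 17 / 2 := rfl
    rw [h19, e18, e17]; linear_combination ((-1/512) + (1/512)*u) * hs + ((1/2048) + (-1/1024)*s) * h5
  have e20 : mk s 20 = ((-1/512)) := by
    have h20 : mk s 20 = s * mk s 19 - mk s 18 / 2 := rfl
    rw [h20, e19, e18]; linear_combination ((-1/512)) * hs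
  have e21 : mk s 21 = ((-1/1024)*s) := by
    have h21 : mk s 21 = s * mk s 20 - mk s 19 / 2 := rfl
    rw [h21, e20, e19]; ring
  have e22 : mk s 22 = ((3/4096) + (-1/2048)*s + (-1/4096)*u + (1/2048)*u*s) := by
    have h22 : mk s 22 = s * mk s 21 - mk s 20 / 2 := rfl
    rw [h22, e21, e20]; linear_combination ((-1/1024)) * hs
  have e23 : mk s 23 = ((1/2048) + (-1/4096)*s + (1/4096)*u*s) := by
    have h23 : mk s 23 = s * mk s 22 - mk s 21 / 2 := rfl
    rw [h23, e22, e21]; linear_combination ((-1/2048) + (1/2048)*u) * hs + ((1/8192) + (-1/4096)*s) * h5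
  have e24 : mk s 24 = ((-1/8192) + (1/8192)*u) := by
    have h24 : mk s 24 = s * mk s 23 - mk s 22 / 2 := rfl
    rw [h24, e23, e22]; linear_combination ((-1/4096) + (1/4096)*u) * hs + ((1/16384) + (-1/8192)*s) * h5
  have e25 : mk s 25 = ((-1/4096)) := by
    have h25 : mk s 25 = s * mk s 24 - mk s 23 / 2 := rfl
    rw [h25, e24, e23]; ring
  have e26 : mk s 26 = ((1/16384) + (-1/4096)*s + (-1/16384)*u) := by
    have h26 : mk s 26 = s * mk s 25 - mk s 24 / 2 := rfl
    rw [h26, e25, e24]; ring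
  have e27 : mk s 27 = ((1/16384) + (-1/16384)*s + (-1/16384)*u + (1/16384)*u*s) := by
    have h27 : mk s 27 = s * mk s 26 - mk s 25 / 2 := rfl
    rw [h27, e26, e25]; linear_combination ((-1/4096)) * hs
  have e28 : mk s 28 = ((1/32768) + (1/32768)*u) := by
    have h28 : mk s 28 = s * mk s 27 - mk s 26 / 2 := rfl
    rw [h28, e27, e26]; linear_combination ((-1/16384) + (1/16384)*u) * hs + ((1/65536) + (-1/32768)*s) * h5
  have e29 : mk s 29 = ((-1/32768) + (1/16384)*s + (1/32768)*u) := by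
    have h29 : mk s 29 = s * mk s 28 - mk s 27 / 2 := rfl
    rw [h29, e28, e27]; ring
  have e30 : mk s 30 = (0 : ℝ) := by
    have h30 : mk s 30 = s * mk s 29 - mk s 28 / 2 := rfl
    rw [h30, e29, e28]; linear_combination ((1/16384)) * hs
  have e31 : mk s 31 = ((1/65536) + (-1/32768)*s + (-1/65536)*u) := by
    have h31 : mk s 31 = s * mk s 30 - mk s 29 / 2 := rfl
    rw [h31, e30, e29]; ring
  have e32 : mk s 32 = ((-1/131072) + (-1/131072)*u) := by
    have h32 : mk s 32 = s * mk s 31 - mk s 30 / 2 := rfl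
    rw [h32, e31, e30]; linear_combination ((-1/32768)) * hs
  have e33 : mk s 33 = ((-1/131072) + (1/131072)*s + (1/131072)*u + (-1/131072)*u*s) := by
    have h33 : mk s 33 = s * mk s 32 - mk s 31 / 2 := rfl
    rw [h33, e32, e31]; ring
  have e34 : mk s 34 = ((-1/262144) + (1/65536)*s + (1/262144)*u) := by
    have h34 : mk s 34 = s * mk s 33 - mk s 32 / 2 := rfl
    rw [h34, e33, e32]; linear_combination ((1/131072) + (-1/131072)*u) * hs + ((-1/524288) + (1/262144)*s) * h5
  have e35 : mk s 35 = ((1/131072)) := by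
    have h35 : mk s 35 = s * mk s 34 - mk s 33 / 2 := rfl
    rw [h35, e34, e33]; linear_combination ((1/65536)) * hs
  have e36 : mk s 36 = ((1/524288) + (-1/524288)*u) := by
    have h36 : mk s 36 = s * mk s 35 - mk s 34 / 2 := rfl
    rw [h36, e35, e34]; ring
  have e37 : mk s 37 = ((-1/262144) + (1/524288)*s + (-1/524288)*u*s) := by
    have h37 : mk s 37 = s * mk s 36 - mk s 35 / 2 := rfl
    rw [h37, e36, e35]; ring
  have e38 : mk s 38 = ((-3/1048576) + (1/524288)*s + (1/1048576)*u + (-1/524288)*u*s) := by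
    have h38 : mk s 38 = s * mk s 37 - mk s 36 / 2 := rfl
    rw [h38, e37, e36]; linear_combination ((1/524288) + (-1/524288)*u) * hs + ((-1/2097152) + (1/1048576)*s) * h5
  have e39 : mk s 39 = ((1/524288)*s) := by
    have h39 : mk s 39 = s * mk s 38 - mk s 37 / 2 := rfl
    rw [h39, e38, e37]; linear_combination ((1/524288) + (-1/524288)*u) * hs + ((-1/2097152) + (1/1048576)*s) * h5
  have e40 : mk s 40 = ((1/524288)) := by
    have h40 : mk s 40 = s * mk s 39 - mk s 38 / 2 := rfl
    rw [h40, e39, e38]; linear_combination ((1/524288)) * hs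
  have e41 : mk s 41 = ((1/1048576)*s) := by
    have h41 : mk s 41 = s * mk s 40 - mk s 39 / 2 := rfl
    rw [h41, e40, e39]; ring
  exact ⟨e0, e1, e2, e3, e4, e5, e6, e7, e8, e9, e10, e11, e12, e13, e14, e15, e16, e17, e18, e19, e20, e21, e22, e23, e24, e25, e26, e27, e28, e29, e30, e31, e32, e33, e34, e35, e36, e37, e38, e39, e40, e41⟩

theorem bbp_sqrt5_log_phi :
    Real.sqrt 5 * Real.log ((1 + Real.sqrt 5) / 2)
      = (5 / (3 * 2 ^ 20)) *
          ∑' k : ℕ, ((1 : ℝ) / 2 ^ 20) ^ k *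
            ∑ j : Fin 40, bbpCoeff j / (40 * k + (j : ℕ) + 1) := by
  set u := Real.sqrt 5 with hu
  have hu0 : 0 ≤ u := Real.sqrt_nonneg 5
  have h5 : u^2 = 5 := Real.sq_sqrt (by norm_num)
  have hul : 2.236 < u := by
    rw [hu]; exact (Real.lt_sqrt (by norm_num)).mpr (by norm_num)
  have hur : u < 2.2361 := by
    rw [hu]; exact (Real.sqrt_lt' (by norm_num)).mpr (by norm_num)
  have hd1nn : (0:ℝ) ≤ 10 - 2*u := by linarith
  have hd2nn : (0:ℝ) ≤ 10 + 2*u := by linarith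
  set d1 := Real.sqrt (10 - 2*u) with hd1
  set d2 := Real.sqrt (10 + 2*u) with hd2
  have hd10 : 0 ≤ d1 := Real.sqrt_nonneg _
  have hd20 : 0 ≤ d2 := Real.sqrt_nonneg _
  have hd1sq : d1^2 = 10 - 2*u := Real.sq_sqrt hd1nn
  have hd2sq : d2^2 = 10 + 2*u := Real.sq_sqrt hd2nn
  have hd1l : 2.3511 < d1 := by
    rw [hd1]; refine (Real.lt_sqrt (by norm_num)).mpr (by norm_num; linarith)
  have hd1r : d1 < 2.3512 := by
    rw [hd1]; refine (Real.sqrt_lt' (by norm_num)).mpr (by norm_num; linarith)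
  have hd2l : 3.80 < d2 := by
    rw [hd2]; refine (Real.lt_sqrt (by norm_num)).mpr (by norm_num; linarith)
  have hd2r : d2 < 3.81 := by
    rw [hd2]; refine (Real.sqrt_lt' (by norm_num)).mpr (by norm_num; linarith)
  set s1 : ℝ := (1 + u + d1)/4 with hs1def
  set s2 : ℝ := (1 + u - d1)/4 with hs2def
  set s3 : ℝ := (1 - u + d2)/4 with hs3def
  set s4 : ℝ := (1 - u - d2)/4 with hs4def
  have hs1 : s1^2 = (1 + u)/2 * s1 - (u - 1)/4 := by
    rw [hs1def]; linear_combination (1/16) * hd1sq - (1/16) * h5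
  have hs2 : s2^2 = (1 + u)/2 * s2 - (u - 1)/4 := by
    rw [hs2def]; linear_combination (1/16) * hd1sq - (1/16) * h5
  have hs3 : s3^2 = (1 - u)/2 * s3 - (-(1 + u)/4) := by
    rw [hs3def]; linear_combination (1/16) * hd2sq - (1/16) * h5
  have hs4 : s4^2 = (1 - u)/2 * s4 - (-(1 + u)/4) := by
    rw [hs4def]; linear_combination (1/16) * hd2sq - (1/16) * h5
  have hsumA : s1 + s2 = (1 + u)/2 := by rw [hs1def, hs2def]; ring
  have hsumB : s3 + s4 = (1 - u)/2 := by rw [hs3def, hs4def]; ring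
  have hprodA : s1 * s2 = (u - 1)/4 := by
    rw [hs1def, hs2def]; linear_combination (-1/16) * hd1sq + (1/16) * h5
  have hprodB : s3 * s4 = -(1 + u)/4 := by
    rw [hs3def, hs4def]; linear_combination (-1/16) * hd2sq + (1/16) * h5
  have hb1 : 0 < s1 ∧ s1 < 1.3969 := by
    rw [hs1def]; constructor <;> linarith
  have hb2 : 0 < s2 ∧ s2 < 1 := by
    rw [hs2def]; constructor <;> linarith
  have hb3 : 0 < s3 ∧ s3 < 1 := by
    rw [hs3def]; constructor <;> linarith
  have hb4 : (-1.27 : ℝ) < s4 ∧ s4 < 0 := by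
    rw [hs4def]; constructor <;> linarith
  have h4s1 : s1^2 < 2 := by
    rw [sq]; linarith [mul_lt_mul'' hb1.2 hb1.2 hb1.1.le hb1.1.le]
  have h4s2 : s2^2 < 2 := by
    rw [sq]; linarith [mul_lt_mul'' hb2.2 hb2.2 hb2.1.le hb2.1.le]
  have h4s3 : s3^2 < 2 := by
    rw [sq]; linarith [mul_lt_mul'' hb3.2 hb3.2 hb3.1.le hb3.1.le]
  have h4s4 : s4^2 < 2 := by
    have hneg : -s4 < 1.27 := by linarith [hb4.1]
    have hnn : (0:ℝ) ≤ -s4 := by linarith only [hb4.2, hb4.1]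
    rw [sq]; linarith [mul_lt_mul'' hneg hneg hnn hnn]
  obtain ⟨A1_0, A1_1, A1_2, A1_3, A1_4, A1_5, A1_6, A1_7, A1_8, A1_9, A1_10, A1_11, A1_12, A1_13, A1_14, A1_15, A1_16, A1_17, A1_18, A1_19, A1_20, A1_21, A1_22, A1_23, A1_24, A1_25, A1_26, A1_27, A1_28, A1_29, A1_30, A1_31, A1_32, A1_33, A1_34, A1_35, A1_36, A1_37, A1_38, A1_39, A1_40, A1_41⟩ := tblA u s1 h5 hs1
  obtain ⟨A2_0, A2_1, A2_2, A2_3, A2_4, A2_5, A2_6, A2_7, A2_8, A2_9, A2_10, A2_11, A2_12, A2_13, A2_14, A2_15, A2_16, A2_17, A2_18, A2_19, A2_20, A2_21, A2_22, A2_23, A2_24, A2_25, A2_26, A2_27, A2_28, A2_29, A2_30, A2_31, A2_32, A2_33, A2_34, A2_35, A2_36, A2_37, A2_38, A2_39, A2_40, A2_41⟩ := tblA u s2 h5 hs2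
  obtain ⟨B1_0, B1_1, B1_2, B1_3, B1_4, B1_5, B1_6, B1_7, B1_8, B1_9, B1_10, B1_11, B1_12, B1_13, B1_14, B1_15, B1_16, B1_17, B1_18, B1_19, B1_20, B1_21, B1_22, B1_23, B1_24, B1_25, B1_26, B1_27, B1_28, B1_29, B1_30, B1_31, B1_32, B1_33, B1_34, B1_35, B1_36, B1_37, B1_38, B1_39, B1_40, B1_41⟩ := tblB u s3 h5 hs3
  obtain ⟨B2_0, B2_1, B2_2, B2_3, B2_4, B2_5, B2_6, B2_7, B2_8, B2_9, B2_10, B2_11, B2_12, B2_13, B2_14, B2_15, B2_16, B2_17, B2_18, B2_19, B2_20, B2_21, B2_22, B2_23, B2_24, B2_25, B2_26, B2_27, B2_28, B2_29, B2_30, B2_31, B2_32, B2_33, B2_34, B2_35, B2_36, B2_37, B2_38, B2_39, B2_40, B2_41⟩ := tblB u s4 h5 hs4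
  -- analytic part
  have H1 := mk_hasSum s1 h4s1
  have H2 := mk_hasSum s2 h4s2
  have H3 := mk_hasSum s3 h4s3
  have H4 := mk_hasSum s4 h4s4
  have Hcomb := ((H1.add H2).sub (H3.add H4)).mul_left ((2:ℝ)^20 * u / 10)
  obtain ⟨G, hGdef⟩ : ∃ G : ℕ → ℝ, G = fun n =>
      (2:ℝ)^20 * u / 10 * (mk s1 n + mk s2 n - mk s3 n - mk s4 n) := ⟨_, rfl⟩
  have Hall : HasSum (fun n : ℕ => G n / n)
      ((2:ℝ)^20 * u / 10 * (-Real.log (3/2 - s1) + -Real.log (3/2 - s2)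
        - (-Real.log (3/2 - s3) + -Real.log (3/2 - s4)))) := by
    have hfe : (fun n : ℕ => (2:ℝ)^20 * u / 10 *
        (mk s1 n / n + mk s2 n / n - (mk s3 n / n + mk s4 n / n))) = fun n : ℕ => G n / n := by
      funext n; simp only [hGdef]; ring
    rw [← hfe]
    exact Hcomb
  -- scaling
  have hsc1 := mk_scale s1 (by rw [A1_40]; norm_num) (by rw [A1_41]; ring)
  have hsc2 := mk_scale s2 (by rw [A2_40]; norm_num) (by rw [A2_41]; ring)
  have hsc3 := mk_scale s3 (by rw [B1_40]; norm_num) (by rw [B1_41]; ring)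
  have hsc4 := mk_scale s4 (by rw [B2_40]; norm_num) (by rw [B2_41]; ring)
  have hGscale : ∀ k m, G (40*k+m) = G m / (2^20)^k := by
    intro k m
    simp only [hGdef]
    rw [hsc1 k m, hsc2 k m, hsc3 k m, hsc4 k m]
    ring
  -- the 40 coefficient values
  have hv1 : G 1 = (2^19 : ℝ) := by
    simp only [hGdef]; rw [A1_1, A2_1, B1_1, B2_1]; linear_combination ((524288/5)*u) * hsumA + ((-524288/5)*u) * hsumB + ((524288/5)) * h5
  have hv2 : G 2 = (0 : ℝ) := by
    simp only [hGdef]; rw [A1_2, A2_2, B1_2, B2_2]; linear_combination ((262144/5)*u + (262144/5)*u^2) * hsumA + ((-262144/5)*u + (262144/5)*u^2) * hsumB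
  have hv3 : G 3 = (2^18 : ℝ) := by
    simp only [hGdef]; rw [A1_3, A2_3, B1_3, B2_3]; linear_combination ((131072/5)*u + (131072/5)*u^2) * hsumA + ((-131072/5)*u + (131072/5)*u^2) * hsumB + ((262144/5)) * h5
  have hv4 : G 4 = (2^18 : ℝ) := by
    simp only [hGdef]; rw [A1_4, A2_4, B1_4, B2_4]; linear_combination ((262144/5)) * h5
  have hv5 : G 5 = (0 : ℝ) := by
    simp only [hGdef]; rw [A1_5, A2_5, B1_5, B2_5]; ring
  have hv6 : G 6 = (0 : ℝ) := by
    simp only [hGdef]; rw [A1_6, A2_6, B1_6, B2_6]; linear_combination ((131072/5)*u) * hsumA + ((-131072/5)*u) * hsumB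
  have hv7 : G 7 = (-(2^16) : ℝ) := by
    simp only [hGdef]; rw [A1_7, A2_7, B1_7, B2_7]; linear_combination ((32768/5)*u + (32768/5)*u^2) * hsumA + ((-32768/5)*u + (32768/5)*u^2) * hsumB + ((-65536/5)) * h5
  have hv8 : G 8 = (2^16 : ℝ) := by
    simp only [hGdef]; rw [A1_8, A2_8, B1_8, B2_8]; linear_combination ((65536/5)) * h5
  have hv9 : G 9 = (2^15 : ℝ) := by
    simp only [hGdef]; rw [A1_9, A2_9, B1_9, B2_9]; linear_combination ((-32768/5)*u) * hsumA + ((32768/5)*u) * hsumB + ((32768/5)) * h5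
  have hv10 : G 10 = (0 : ℝ) := by
    simp only [hGdef]; rw [A1_10, A2_10, B1_10, B2_10]; ring
  have hv11 : G 11 = (-(2^14) : ℝ) := by
    simp only [hGdef]; rw [A1_11, A2_11, B1_11, B2_11]; linear_combination ((16384/5)*u) * hsumA + ((-16384/5)*u) * hsumB + ((-16384/5)) * h5
  have hv12 : G 12 = (-(2^14) : ℝ) := by
    simp only [hGdef]; rw [A1_12, A2_12, B1_12, B2_12]; linear_combination ((-16384/5)) * h5
  have hv13 : G 13 = (2^13 : ℝ) := by
    simp only [hGdef]; rw [A1_13, A2_13, B1_13, B2_13]; linear_combination ((-4096/5)*u + (-4096/5)*u^2) * hsumA + ((4096/5)*u + (-4096/5)*u^2) * hsumB + ((8192/5)) * h5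
  have hv14 : G 14 = (0 : ℝ) := by
    simp only [hGdef]; rw [A1_14, A2_14, B1_14, B2_14]; linear_combination ((-8192/5)*u) * hsumA + ((8192/5)*u) * hsumB
  have hv15 : G 15 = (0 : ℝ) := by
    simp only [hGdef]; rw [A1_15, A2_15, B1_15, B2_15]; ring
  have hv16 : G 16 = (-(2^12) : ℝ) := by
    simp only [hGdef]; rw [A1_16, A2_16, B1_16, B2_16]; linear_combination ((-4096/5)) * h5
  have hv17 : G 17 = (-(2^11) : ℝ) := by
    simp only [hGdef]; rw [A1_17, A2_17, B1_17, B2_17]; linear_combination ((-1024/5)*u + (-1024/5)*u^2) * hsumA + ((1024/5)*u + (-1024/5)*u^2) * hsumB + ((-2048/5)) * h5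
  have hv18 : G 18 = (0 : ℝ) := by
    simp only [hGdef]; rw [A1_18, A2_18, B1_18, B2_18]; linear_combination ((-1024/5)*u + (-1024/5)*u^2) * hsumA + ((1024/5)*u + (-1024/5)*u^2) * hsumB
  have hv19 : G 19 = (-(2^10) : ℝ) := by
    simp only [hGdef]; rw [A1_19, A2_19, B1_19, B2_19]; linear_combination ((-1024/5)*u) * hsumA + ((1024/5)*u) * hsumB + ((-1024/5)) * h5
  have hv20 : G 20 = (0 : ℝ) := by
    simp only [hGdef]; rw [A1_20, A2_20, B1_20, B2_20]; ring
  have hv21 : G 21 = (-(2^9) : ℝ) := by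
    simp only [hGdef]; rw [A1_21, A2_21, B1_21, B2_21]; linear_combination ((-512/5)*u) * hsumA + ((512/5)*u) * hsumB + ((-512/5)) * h5
  have hv22 : G 22 = (0 : ℝ) := by
    simp only [hGdef]; rw [A1_22, A2_22, B1_22, B2_22]; linear_combination ((-256/5)*u + (-256/5)*u^2) * hsumA + ((256/5)*u + (-256/5)*u^2) * hsumB
  have hv23 : G 23 = (-(2^8) : ℝ) := by
    simp only [hGdef]; rw [A1_23, A2_23, B1_23, B2_23]; linear_combination ((-128/5)*u + (-128/5)*u^2) * hsumA + ((128/5)*u + (-128/5)*u^2) * hsumB + ((-256/5)) * h5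
  have hv24 : G 24 = (-(2^8) : ℝ) := by
    simp only [hGdef]; rw [A1_24, A2_24, B1_24, B2_24]; linear_combination ((-256/5)) * h5
  have hv25 : G 25 = (0 : ℝ) := by
    simp only [hGdef]; rw [A1_25, A2_25, B1_25, B2_25]; ring
  have hv26 : G 26 = (0 : ℝ) := by
    simp only [hGdef]; rw [A1_26, A2_26, B1_26, B2_26]; linear_combination ((-128/5)*u) * hsumA + ((128/5)*u) * hsumB
  have hv27 : G 27 = (2^6 : ℝ) := by
    simp only [hGdef]; rw [A1_27, A2_27, B1_27, B2_27]; linear_combination ((-32/5)*u + (-32/5)*u^2) * hsumA + ((32/5)*u + (-32/5)*u^2) * hsumB + ((64/5)) * h5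
  have hv28 : G 28 = (-(2^6) : ℝ) := by
    simp only [hGdef]; rw [A1_28, A2_28, B1_28, B2_28]; linear_combination ((-64/5)) * h5
  have hv29 : G 29 = (-(2^5) : ℝ) := by
    simp only [hGdef]; rw [A1_29, A2_29, B1_29, B2_29]; linear_combination ((32/5)*u) * hsumA + ((-32/5)*u) * hsumB + ((-32/5)) * h5
  have hv30 : G 30 = (0 : ℝ) := by
    simp only [hGdef]; rw [A1_30, A2_30, B1_30, B2_30]; ring
  have hv31 : G 31 = (2^4 : ℝ) := by
    simp only [hGdef]; rw [A1_31, A2_31, B1_31, B2_31]; linear_combination ((-16/5)*u) * hsumA + ((16/5)*u) * hsumB + ((16/5)) * h5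
  have hv32 : G 32 = (2^4 : ℝ) := by
    simp only [hGdef]; rw [A1_32, A2_32, B1_32, B2_32]; linear_combination ((16/5)) * h5
  have hv33 : G 33 = (-(2^3) : ℝ) := by
    simp only [hGdef]; rw [A1_33, A2_33, B1_33, B2_33]; linear_combination ((4/5)*u + (4/5)*u^2) * hsumA + ((-4/5)*u + (4/5)*u^2) * hsumB + ((-8/5)) * h5
  have hv34 : G 34 = (0 : ℝ) := by
    simp only [hGdef]; rw [A1_34, A2_34, B1_34, B2_34]; linear_combination ((8/5)*u) * hsumA + ((-8/5)*u) * hsumB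
  have hv35 : G 35 = (0 : ℝ) := by
    simp only [hGdef]; rw [A1_35, A2_35, B1_35, B2_35]; ring
  have hv36 : G 36 = (2^2 : ℝ) := by
    simp only [hGdef]; rw [A1_36, A2_36, B1_36, B2_36]; linear_combination ((4/5)) * h5
  have hv37 : G 37 = (2 : ℝ) := by
    simp only [hGdef]; rw [A1_37, A2_37, B1_37, B2_37]; linear_combination ((1/5)*u + (1/5)*u^2) * hsumA + ((-1/5)*u + (1/5)*u^2) * hsumB + ((2/5)) * h5
  have hv38 : G 38 = (0 : ℝ) := by
    simp only [hGdef]; rw [A1_38, A2_38, B1_38, B2_38]; linear_combination ((1/5)*u + (1/5)*u^2) * hsumA + ((-1/5)*u + (1/5)*u^2) * hsumB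
  have hv39 : G 39 = (1 : ℝ) := by
    simp only [hGdef]; rw [A1_39, A2_39, B1_39, B2_39]; linear_combination ((1/5)*u) * hsumA + ((-1/5)*u) * hsumB + ((1/5)) * h5
  have hv40 : G 40 = (0 : ℝ) := by
    simp only [hGdef]; rw [A1_40, A2_40, B1_40, B2_40]; ring
  have hval : ∀ j : Fin 40, G ((j:ℕ) + 1) = bbpCoeff j := by
    intro j
    fin_cases j
    · exact hv1
    · exact hv2
    · exact hv3
    · exact hv4
    · exact hv5
    · exact hv6
    · exact hv7
    · exact hv8
    · exact hv9
    · exact hv10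
    · exact hv11
    · exact hv12
    · exact hv13
    · exact hv14
    · exact hv15
    · exact hv16
    · exact hv17
    · exact hv18
    · exact hv19
    · exact hv20
    · exact hv21
    · exact hv22
    · exact hv23
    · exact hv24
    · exact hv25
    · exact hv26
    · exact hv27
    · exact hv28
    · exact hv29
    · exact hv30
    · exact hv31
    · exact hv32
    · exact hv33
    · exact hv34
    · exact hv35
    · exact hv36
    · exact hv37
    · exact hv38
    · exact hv39
    · exact hv40
  -- reindexing
  have HG : HasSum (fun m : ℕ => G (m+1) / ((m:ℝ)+1))
      ((2:ℝ)^20 * u / 10 * (-Real.log (3/2 - s1) + -Real.log (3/2 - s2)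
        - (-Real.log (3/2 - s3) + -Real.log (3/2 - s4)))) := by
    have h1 := (hasSum_nat_add_iff' (f := fun n : ℕ => G n / n) 1).mpr Hall
    simpa using h1
  have HP := ((Nat.divModEquiv 40).symm.hasSum_iff
    (f := fun m : ℕ => G (m+1) / ((m:ℝ)+1))).mpr HG
  have Hfib : HasSum (fun k : ℕ => ((1 : ℝ) / 2 ^ 20) ^ k *
      ∑ j : Fin 40, bbpCoeff j / (40 * k + (j : ℕ) + 1))
      ((2:ℝ)^20 * u / 10 * (-Real.log (3/2 - s1) + -Real.log (3/2 - s2)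
        - (-Real.log (3/2 - s3) + -Real.log (3/2 - s4)))) := by
    refine HP.prod_fiberwise fun k => ?_
    convert hasSum_fintype _ using 1
    simp only [Function.comp_apply, Nat.divModEquiv_symm_apply]
    rw [Finset.mul_sum]
    refine Finset.sum_congr rfl fun j _ => ?_
    rw [← hval j, show k*40+(j:ℕ)+1 = 40*k+((j:ℕ)+1) from by ring, hGscale]
    push_cast
    ring_nf
    norm_num
  rw [Hfib.tsum_eq]
  -- final algebra with logarithms
  have hp1 : (0:ℝ) < 3/2 - s1 := by linarith only [hb1.2]
  have hp2 : (0:ℝ) < 3/2 - s2 := by linarith only [hb2.2]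
  have hp3 : (0:ℝ) < 3/2 - s3 := by linarith only [hb3.2]
  have hp4 : (0:ℝ) < 3/2 - s4 := by linarith only [hb4.2, hb4.1]
  have hA : Real.log (3/2 - s1) + Real.log (3/2 - s2) = Real.log ((5 - 2*u)/4) := by
    rw [← Real.log_mul (ne_of_gt hp1) (ne_of_gt hp2)]
    congr 1
    linear_combination (-3/2)*hsumA + hprodA
  have hB : Real.log (3/2 - s3) + Real.log (3/2 - s4) = Real.log ((5 + 2*u)/4) := by
    rw [← Real.log_mul (ne_of_gt hp3) (ne_of_gt hp4)]
    congr 1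
    linear_combination (-3/2)*hsumB + hprodB
  have hkey : ((1+u)/2)^6 * ((5 - 2*u)/4) = (5 + 2*u)/4 := by
    linear_combination ((63/256) + (5/64)*u + (-5/128)*u^3 + (-7/256)*u^4 + (-1/128)*u^5) * h5
  have hphipos : (0:ℝ) < (1+u)/2 := by linarith
  have h52pos : (0:ℝ) < (5-2*u)/4 := by linarith
  have hE3 : Real.log ((5 + 2*u)/4) = 6 * Real.log ((1+u)/2) + Real.log ((5-2*u)/4) := by
    rw [← hkey, Real.log_mul (pow_ne_zero 6 (ne_of_gt hphipos)) (ne_of_gt h52pos),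
      Real.log_pow]
    norm_num
  linear_combination (u/6) * hA + (-(u/6)) * hB + (-(u/6)) * hE3
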